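/- Let w ∈ ℝ^n with w_1 ≥ ... ≥ w_n ≥ 0, let h(z) = −g_w(z), w̃_i = −w_{n+1−i}, and β > 0. Then the Moreau envelope h^β is differentiable on ℝ^n with gradient ∇h^β(z) = proj_{P(w̃)}(z/β) for all z, and this gradient is (1/β)-Lipschitz: ‖∇h^β(z) − ∇h^β(z')‖ ≤ (1/β)‖z − z'‖ for all z, z' ∈ ℝ^n. -/

import Mathlib

/-- The nondecreasing rearrangement `x^↑` of a vector `x ∈ ℝ^n`. -/
noncomputable def sortedAsc {n : ℕ} (x : Fin n → ℝ) : Fin n → ℝ := x ∘ Tuple.sort x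

/-- The generalized Gini welfare function `g_w(x) = Σ_i w_i x^↑_i`. -/
noncomputable def ggf {n : ℕ} (w x : Fin n → ℝ) : ℝ := ∑ i, w i * sortedAsc x i

/-- The permutahedron induced by `v`: the convex hull of all permutations of `v`. -/
noncomputable def permutahedron {n : ℕ} (v : Fin n → ℝ) : Set (Fin n → ℝ) :=
  convexHull ℝ {y | ∃ σ : Equiv.Perm (Fin n), y = v ∘ σ}

/-- The reversed negated weight vector `w̃`, with `w̃_i = −w_{n+1−i}`. -/
noncomputable def tildeW {n : ℕ} (w : Fin n → ℝ) : Fin n → ℝ := fun i => -w i.rev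

/-- `y` is the Euclidean projection of `z` onto `C`. -/
def IsProjOn {n : ℕ} (C : Set (Fin n → ℝ)) (z y : Fin n → ℝ) : Prop :=
  y ∈ C ∧ ∀ y' ∈ C,
    Real.sqrt (∑ i, (z i - y i) ^ 2) ≤ Real.sqrt (∑ i, (z i - y' i) ^ 2)

/-- The Moreau envelope `h^β(z) = inf_{z'} [h(z') + ‖z − z'‖²/(2β)]` (Euclidean norm). -/
noncomputable def moreau {n : ℕ} (β : ℝ) (h : (Fin n → ℝ) → ℝ) (z : Fin n → ℝ) : ℝ :=
  ⨅ z' : Fin n → ℝ, (h z' + (∑ i, (z i - z' i) ^ 2) / (2 * β))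

open Finset RealInnerProductSpace

noncomputable def toE {n : ℕ} (x : Fin n → ℝ) : EuclideanSpace ℝ (Fin n) := WithLp.toLp 2 x

lemma inner_toE {n : ℕ} (x y : Fin n → ℝ) : ⟪toE x, toE y⟫ = ∑ i, x i * y i := by
  simp [toE, PiLp.inner_apply, RCLike.inner_apply, conj_trivial]
  exact Finset.sum_congr rfl fun i _ => mul_comm _ _

lemma norm_toE {n : ℕ} (x : Fin n → ℝ) : ‖toE x‖ = Real.sqrt (∑ i, x i ^ 2) := by
  rw [EuclideanSpace.norm_eq]
  congr 1; apply Finset.sum_congr rfl; intro i _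
  rw [Real.norm_eq_abs, sq_abs]; rfl

lemma normsq_toE {n : ℕ} (x : Fin n → ℝ) : ‖toE x‖ ^ 2 = ∑ i, x i ^ 2 := by
  rw [← real_inner_self_eq_norm_sq, inner_toE]
  apply Finset.sum_congr rfl; intro i _; ring

lemma toE_sub {n : ℕ} (x y : Fin n → ℝ) : toE x - toE y = toE (fun i => x i - y i) := rfl

lemma vertex_le {n : ℕ} (w : Fin n → ℝ) (hw : Antitone w) (y : Fin n → ℝ)
    (σ : Equiv.Perm (Fin n)) : ∑ i, tildeW w (σ i) * y i ≤ -(ggf w y) := by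
  have hs : Monotone (sortedAsc y) := Tuple.monotone_sort y
  have hav : Antivary w (sortedAsc y) := (hs.antivary hw).symm
  set τ := Tuple.sort y with hτ
  set π : Equiv.Perm (Fin n) := τ.trans (σ.trans Fin.revPerm) with hπ
  have key : ∑ i, w i * sortedAsc y i ≤ ∑ i, w (π i) * sortedAsc y i := by
    have := hav.sum_smul_le_sum_comp_perm_smul (σ := π)
    simpa [smul_eq_mul] using this
  have reindex : ∑ i, w (π i) * sortedAsc y i = ∑ i, w ((σ i).rev) * y i := by
    rw [← Equiv.sum_comp τ (fun i => w ((σ i).rev) * y i)]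
    rfl
  have : ∑ i, tildeW w (σ i) * y i = -∑ i, w ((σ i).rev) * y i := by
    simp [tildeW, neg_mul, Finset.sum_neg_distrib]
  rw [this, ggf]
  have := key.trans_eq reindex
  linarith

lemma vertex_attain {n : ℕ} (w y : Fin n → ℝ) :
    ∃ σ : Equiv.Perm (Fin n), -(ggf w y) = ∑ i, tildeW w (σ i) * y i := by
  refine ⟨((Tuple.sort y)⁻¹ : Equiv.Perm (Fin n)).trans Fin.revPerm, ?_⟩
  have : ∑ i, tildeW w (((Tuple.sort y)⁻¹.trans Fin.revPerm) i) * y i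
      = ∑ i, -w ((Tuple.sort y)⁻¹ i) * y i := by
    apply Finset.sum_congr rfl; intro i _
    simp [tildeW, Fin.rev_rev]
  rw [this, ← Equiv.sum_comp (Tuple.sort y) (fun i => -w ((Tuple.sort y)⁻¹ i) * y i)]
  simp [ggf, sortedAsc, Finset.sum_neg_distrib]

lemma hull_le {n : ℕ} (w : Fin n → ℝ) (hw : Antitone w) (y : Fin n → ℝ)
    {u : Fin n → ℝ} (hu : u ∈ permutahedron (tildeW w)) :
    ∑ i, u i * y i ≤ -(ggf w y) := by
  have hlin : IsLinearMap ℝ (fun u : Fin n → ℝ => ∑ i, u i * y i) := by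
    constructor
    · intro a b; simp [add_mul, Finset.sum_add_distrib]
    · intro c a; simp [Finset.mul_sum, mul_assoc]
  have hconv : Convex ℝ {u : Fin n → ℝ | ∑ i, u i * y i ≤ -(ggf w y)} :=
    convex_halfSpace_le hlin _
  refine convexHull_min ?_ hconv hu
  rintro u ⟨σ, rfl⟩
  exact vertex_le w hw y σ

lemma proj_VI {n : ℕ} {C : Set (Fin n → ℝ)} (hC : Convex ℝ C) {z p : Fin n → ℝ}
    (hp : IsProjOn C z p) : ∀ u ∈ C, ⟪toE z - toE p, toE u - toE p⟫ ≤ 0 := by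
  set CE : Set (EuclideanSpace ℝ (Fin n)) := toE '' C with hCE_def
  have hCE : Convex ℝ CE :=
    hC.linear_image ((WithLp.linearEquiv 2 ℝ (Fin n → ℝ)).symm : (Fin n → ℝ) →ₗ[ℝ] EuclideanSpace ℝ (Fin n))
  have hmem : toE p ∈ CE := ⟨p, hp.1, rfl⟩
  have hnorm : ∀ a b : Fin n → ℝ,
      ‖toE a - toE b‖ = Real.sqrt (∑ i, (a i - b i) ^ 2) := by
    intro a b; rw [toE_sub, norm_toE]
  have hinf : ‖toE z - toE p‖ = ⨅ w : CE, ‖toE z - w‖ := by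
    have hne : Nonempty CE := ⟨⟨toE p, hmem⟩⟩
    apply le_antisymm
    · apply le_ciInf
      rintro ⟨w, u, hu, rfl⟩
      rw [hnorm, hnorm]
      exact hp.2 u hu
    · have hbdd : BddBelow (Set.range fun w : CE => ‖toE z - (w : EuclideanSpace ℝ (Fin n))‖) := by
        refine ⟨0, ?_⟩
        rintro x ⟨w, rfl⟩
        exact norm_nonneg _
      exact ciInf_le hbdd ⟨toE p, hmem⟩
  intro u hu
  exact (norm_eq_iInf_iff_real_inner_le_zero hCE hmem).1 hinf (toE u) ⟨u, hu, rfl⟩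

lemma proj_nonexpansive {n : ℕ} {C : Set (Fin n → ℝ)} (hC : Convex ℝ C)
    {a b pa pb : Fin n → ℝ} (ha : IsProjOn C a pa) (hb : IsProjOn C b pb) :
    ‖toE pa - toE pb‖ ≤ ‖toE a - toE b‖ := by
  have h1 := proj_VI hC ha pb hb.1
  have h2 := proj_VI hC hb pa ha.1
  have h1' : 0 ≤ ⟪toE a - toE pa, toE pa - toE pb⟫ := by
    rw [show toE pb - toE pa = -(toE pa - toE pb) from (neg_sub _ _).symm,
      inner_neg_right] at h1
    linarith
  have h2' : ⟪toE b - toE pb, toE pa - toE pb⟫ ≤ 0 := h2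
  have expand : ⟪toE a - toE b, toE pa - toE pb⟫
      = ⟪toE a - toE pa, toE pa - toE pb⟫ + ‖toE pa - toE pb‖ ^ 2
        - ⟪toE b - toE pb, toE pa - toE pb⟫ := by
    rw [← real_inner_self_eq_norm_sq]
    rw [show toE a - toE b = (toE a - toE pa) + (toE pa - toE pb) - (toE b - toE pb)
      from by abel, inner_sub_left, inner_add_left]
  have key : ‖toE pa - toE pb‖ ^ 2 ≤ ⟪toE a - toE b, toE pa - toE pb⟫ := by
    rw [expand]; linarith
  have cs : ⟪toE a - toE b, toE pa - toE pb⟫ ≤ ‖toE a - toE b‖ * ‖toE pa - toE pb‖ :=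
    real_inner_le_norm _ _
  nlinarith [norm_nonneg (toE pa - toE pb), norm_nonneg (toE a - toE b)]


lemma pt_lower {n : ℕ} (w : Fin n → ℝ) (hw : Antitone w) {β : ℝ} (hβ : 0 < β)
    {u : Fin n → ℝ} (hu : u ∈ permutahedron (tildeW w)) (z z' : Fin n → ℝ) :
    ⟪toE u, toE z⟫ - β/2 * ‖toE u‖^2
      ≤ -(ggf w z') + (∑ i, (z i - z' i)^2) / (2*β) := by
  have h1 : ∑ i, u i * z' i ≤ -(ggf w z') := hull_le w hw z' hu
  have h2 : ⟪toE u, toE z'⟫ = ∑ i, u i * z' i := inner_toE u z'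
  have h3 : (∑ i, (z i - z' i)^2) = ‖toE z - toE z'‖^2 := by
    rw [toE_sub, normsq_toE]
  have h4 : ⟪toE u, toE z - toE z'⟫ ≤ ‖toE u‖ * ‖toE z - toE z'‖ :=
    real_inner_le_norm _ _
  have h5 : ⟪toE u, toE z - toE z'⟫ = ⟪toE u, toE z⟫ - ⟪toE u, toE z'⟫ :=
    inner_sub_right _ _ _
  have h2β : (0:ℝ) < 2*β := by linarith
  have hdd : ‖toE z - toE z'‖^2 / (2*β) * (2*β) = ‖toE z - toE z'‖^2 :=
    div_mul_cancel₀ _ (ne_of_gt h2β)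
  rw [h3]
  nlinarith [sq_nonneg (β * ‖toE u‖ - ‖toE z - toE z'‖), hβ,
    norm_nonneg (toE u), norm_nonneg (toE z - toE z')]

lemma C_nonempty {n : ℕ} (w : Fin n → ℝ) : tildeW w ∈ permutahedron (tildeW w) := by
  apply subset_convexHull
  exact ⟨1, by funext i; simp⟩

lemma moreau_bdd {n : ℕ} (w : Fin n → ℝ) (hw : Antitone w) {β : ℝ} (hβ : 0 < β)
    (z : Fin n → ℝ) :
    BddBelow (Set.range fun z' : Fin n → ℝ =>
      -(ggf w z') + (∑ i, (z i - z' i)^2) / (2*β)) := by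
  refine ⟨⟪toE (tildeW w), toE z⟫ - β/2 * ‖toE (tildeW w)‖^2, ?_⟩
  rintro x ⟨z', rfl⟩
  exact pt_lower w hw hβ (C_nonempty w) z z'

lemma moreau_lower {n : ℕ} (w : Fin n → ℝ) (hw : Antitone w) {β : ℝ} (hβ : 0 < β)
    {u : Fin n → ℝ} (hu : u ∈ permutahedron (tildeW w)) (z : Fin n → ℝ) :
    ⟪toE u, toE z⟫ - β/2 * ‖toE u‖^2 ≤ moreau β (fun v => -(ggf w v)) z :=
  le_ciInf (pt_lower w hw hβ hu z)

lemma moreau_value {n : ℕ} (w : Fin n → ℝ) (hw : Antitone w) {β : ℝ} (hβ : 0 < β)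
    (proj : (Fin n → ℝ) → (Fin n → ℝ))
    (hproj : ∀ z, IsProjOn (permutahedron (tildeW w)) z (proj z)) (z : Fin n → ℝ) :
    moreau β (fun v => -(ggf w v)) z
      = ⟪toE (proj (fun j => z j / β)), toE z⟫
        - β/2 * ‖toE (proj (fun j => z j / β))‖^2 := by
  set p := proj (fun j => z j / β) with hp_def
  have hpC : p ∈ permutahedron (tildeW w) := (hproj _).1
  have hC : Convex ℝ (permutahedron (tildeW w)) := convex_convexHull ℝ _
  apply le_antisymm
  · -- upper bound via z* = z - β p
    set zs : Fin n → ℝ := fun i => z i - β * p i with hzs_def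
    have hle : moreau β (fun v => -(ggf w v)) z
        ≤ -(ggf w zs) + (∑ i, (z i - zs i)^2) / (2*β) :=
      ciInf_le (moreau_bdd w hw hβ z) zs
    -- quadratic term
    have hq : (∑ i, (z i - zs i)^2) = β^2 * ‖toE p‖^2 := by
      rw [normsq_toE p, Finset.mul_sum]
      apply Finset.sum_congr rfl; intro i _
      show (z i - (z i - β * p i))^2 = β^2 * p i ^2
      ring
    -- linear term
    obtain ⟨σ, hσ⟩ := vertex_attain w zs
    have hu₀ : (tildeW w ∘ σ) ∈ permutahedron (tildeW w) :=
      subset_convexHull ℝ _ ⟨σ, rfl⟩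
    have hVI := proj_VI hC (hproj (fun j => z j / β)) _ hu₀
    have hsm : toE (fun j => z j / β) - toE p = (1/β) • toE zs := by
      ext i
      show z i / β - p i = (1/β) * (z i - β * p i)
      field_simp
    have hVI2 : ⟪toE zs, toE (tildeW w ∘ σ) - toE p⟫ ≤ 0 := by
      rw [hsm, real_inner_smul_left] at hVI
      have h1β : (0:ℝ) < 1/β := by positivity
      nlinarith [hVI]
    have hlin : -(ggf w zs) ≤ ⟪toE p, toE zs⟫ := by
      have hcast : -(ggf w zs) = ⟪toE (tildeW w ∘ σ), toE zs⟫ :=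
        hσ.trans (inner_toE (tildeW w ∘ σ) zs).symm
      rw [inner_sub_right] at hVI2
      have hc1 := real_inner_comm (toE zs) (toE (tildeW w ∘ σ))
      have hc2 := real_inner_comm (toE zs) (toE p)
      linarith
    have hzsE : toE zs = toE z - β • toE p := by
      ext i; show z i - β * p i = z i - β * p i; rfl
    have hinner : ⟪toE p, toE zs⟫ = ⟪toE p, toE z⟫ - β * ‖toE p‖^2 := by
      rw [hzsE, inner_sub_right, real_inner_smul_right, real_inner_self_eq_norm_sq]
    have harith : ⟪toE p, toE zs⟫ + β^2 * ‖toE p‖^2 / (2*β)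
        = ⟪toE p, toE z⟫ - β/2 * ‖toE p‖^2 := by
      rw [hinner]; field_simp; ring
    calc moreau β (fun v => -(ggf w v)) z
        ≤ -(ggf w zs) + (∑ i, (z i - zs i)^2) / (2*β) := hle
      _ ≤ ⟪toE p, toE zs⟫ + β^2 * ‖toE p‖^2 / (2*β) := by rw [hq]; linarith
      _ = _ := harith
  · exact moreau_lower w hw hβ hpC z

lemma proj_lip {n : ℕ} (w : Fin n → ℝ) {β : ℝ} (hβ : 0 < β)
    (proj : (Fin n → ℝ) → (Fin n → ℝ))
    (hproj : ∀ z, IsProjOn (permutahedron (tildeW w)) z (proj z)) (z z' : Fin n → ℝ) :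
    ‖toE (proj (fun j => z j / β)) - toE (proj (fun j => z' j / β))‖
      ≤ (1/β) * ‖toE z - toE z'‖ := by
  have hC : Convex ℝ (permutahedron (tildeW w)) := convex_convexHull ℝ _
  have h1 := proj_nonexpansive hC (hproj (fun j => z j / β)) (hproj (fun j => z' j / β))
  have h2 : toE (fun j => z j / β) - toE (fun j => z' j / β) = (1/β) • (toE z - toE z') := by
    ext i
    show z i / β - z' i / β = (1/β) * (z i - z' i)
    field_simp
  rw [h2, norm_smul, Real.norm_eq_abs, abs_of_pos (by positivity)] at h1
  exact h1

set_option maxHeartbeats 1600000 in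
lemma moreau_hasFDeriv {n : ℕ} (w : Fin n → ℝ) (hw : Antitone w) {β : ℝ} (hβ : 0 < β)
    (proj : (Fin n → ℝ) → (Fin n → ℝ))
    (hproj : ∀ z, IsProjOn (permutahedron (tildeW w)) z (proj z)) (z : Fin n → ℝ) :
    HasFDerivAt (moreau β (fun v => -(ggf w v)))
      (∑ i, proj (fun j => z j / β) i •
        (ContinuousLinearMap.proj i : (Fin n → ℝ) →L[ℝ] ℝ)) z := by
  have hC : Convex ℝ (permutahedron (tildeW w)) := convex_convexHull ℝ _
  set F := moreau β (fun v => -(ggf w v)) with hF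
  set P : (Fin n → ℝ) → (Fin n → ℝ) := fun y => proj (fun j => y j / β) with hP
  set L : (Fin n → ℝ) →L[ℝ] ℝ :=
    ∑ i, P z i • (ContinuousLinearMap.proj i : (Fin n → ℝ) →L[ℝ] ℝ) with hL
  have hLapp : ∀ d : Fin n → ℝ, L d = ⟪toE (P z), toE d⟫ := by
    intro d
    rw [inner_toE]
    simp [hL, ContinuousLinearMap.sum_apply]
  have hPmem : ∀ y, P y ∈ permutahedron (tildeW w) := fun y => (hproj _).1
  have squeeze : ∀ z' : Fin n → ℝ,
      0 ≤ F z' - F z - ⟪toE (P z), toE z' - toE z⟫ ∧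
      F z' - F z - ⟪toE (P z), toE z' - toE z⟫ ≤ (1/β) * ‖toE z' - toE z‖^2 := by
    intro z'
    have hvz := moreau_value w hw hβ proj hproj z
    have hvz' := moreau_value w hw hβ proj hproj z'
    have hlow := moreau_lower w hw hβ (hPmem z) z'
    have hup := moreau_lower w hw hβ (hPmem z') z
    rw [← hF] at hvz hvz' hlow hup
    have e1 : ⟪toE (P z), toE z' - toE z⟫
        = ⟪toE (P z), toE z'⟫ - ⟪toE (P z), toE z⟫ := inner_sub_right _ _ _
    constructor
    · rw [e1]; linarith [hvz, hlow]
    · have e2 : ⟪toE (P z'), toE z' - toE z⟫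
          = ⟪toE (P z'), toE z'⟫ - ⟪toE (P z'), toE z⟫ := inner_sub_right _ _ _
      have step1 : F z' - F z - ⟪toE (P z), toE z' - toE z⟫
          ≤ ⟪toE (P z') - toE (P z), toE z' - toE z⟫ := by
        rw [inner_sub_left, e1, e2]; linarith [hvz, hvz', hlow, hup]
      have cs : ⟪toE (P z') - toE (P z), toE z' - toE z⟫
          ≤ ‖toE (P z') - toE (P z)‖ * ‖toE z' - toE z‖ := real_inner_le_norm _ _
      have lip := proj_lip w hβ proj hproj z' z
      have hn : (0:ℝ) ≤ ‖toE z' - toE z‖ := norm_nonneg _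
      nlinarith [lip, cs, step1]
  rw [hasFDerivAt_iff_isLittleO_nhds_zero]
  rw [Asymptotics.isLittleO_iff]
  intro c hc
  have hε : (0:ℝ) < c * β / (n + 1) := by positivity
  rw [Metric.eventually_nhds_iff]
  refine ⟨c * β / (n + 1), hε, ?_⟩
  intro h hdist
  have hnorm : ‖h‖ < c * β / (n + 1) := by
    simpa [dist_zero_right] using hdist
  have hsub : toE (z + h) - toE z = toE h := by
    ext i; show (z i + h i) - z i = h i; ring
  have hsum : ‖toE (z + h) - toE z‖^2 ≤ n * ‖h‖^2 := by
    rw [hsub, normsq_toE]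
    calc ∑ i, h i ^ 2 ≤ ∑ _i : Fin n, ‖h‖^2 := by
          apply Finset.sum_le_sum
          intro i _
          have h0 : |h i| ≤ ‖h‖ := by
            simpa [Real.norm_eq_abs] using norm_le_pi_norm h i
          calc h i ^ 2 = |h i| ^ 2 := (sq_abs _).symm
            _ ≤ ‖h‖ ^ 2 := pow_le_pow_left₀ (abs_nonneg _) h0 2
      _ = n * ‖h‖^2 := by simp [Finset.sum_const, nsmul_eq_mul]
  obtain ⟨hge, hle⟩ := squeeze (z + h)
  have hLh : L h = ⟪toE (P z), toE (z + h) - toE z⟫ := by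
    rw [hLapp, hsub]
  have habs : |F (z + h) - F z - L h| ≤ (1/β) * (n * ‖h‖^2) := by
    rw [hLh, abs_le]
    constructor
    · have h9 : (0:ℝ) ≤ (1/β) * ((n:ℝ) * ‖h‖^2) := by positivity
      linarith
    · calc F (z + h) - F z - ⟪toE (P z), toE (z + h) - toE z⟫
          ≤ (1/β) * ‖toE (z + h) - toE z‖^2 := hle
        _ ≤ (1/β) * (n * ‖h‖^2) :=
            mul_le_mul_of_nonneg_left hsum (by positivity)
  rw [Real.norm_eq_abs]
  refine habs.trans ?_
  have hn0 : (0:ℝ) ≤ ‖h‖ := norm_nonneg h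
  have key : (n:ℝ)/β * ‖h‖ ≤ c * n / (n+1) := by
    rw [div_mul_eq_mul_div, div_le_div_iff₀ hβ (by positivity)]
    calc (n:ℝ) * ‖h‖ * (n+1) ≤ (n:ℝ) * (c*β/(n+1)) * (n+1) := by
          apply mul_le_mul_of_nonneg_right _ (by positivity)
          exact mul_le_mul_of_nonneg_left (le_of_lt hnorm) (Nat.cast_nonneg n)
      _ = c * n * β := by field_simp
  have h1 : (1/β) * ((n:ℝ) * ‖h‖^2) = ((n:ℝ)/β * ‖h‖) * ‖h‖ := by ring
  rw [h1]
  apply mul_le_mul_of_nonneg_right _ hn0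
  refine key.trans ?_
  rw [div_le_iff₀ (by positivity)]
  nlinarith [hc]

/-- For `w_1 ≥ ... ≥ w_n ≥ 0`, `h = −g_w` and `β > 0`: the Moreau envelope `h^β` is
differentiable with gradient `∇h^β(z) = proj_{P(w̃)}(z/β)` (expressed through its directional
derivatives `Dh^β(z)[d] = ⟨proj_{P(w̃)}(z/β), d⟩`), and the gradient is `(1/β)`-Lipschitz
for the Euclidean norm. -/
theorem moreau_gradient {n : ℕ} (w : Fin n → ℝ) (hw : Antitone w) (hw0 : ∀ i, 0 ≤ w i)
    (β : ℝ) (hβ : 0 < β) (proj : (Fin n → ℝ) → (Fin n → ℝ))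
    (hproj : ∀ z, IsProjOn (permutahedron (tildeW w)) z (proj z)) :
    (∀ z : Fin n → ℝ,
      DifferentiableAt ℝ (moreau β (fun v => -(ggf w v))) z ∧
      ∀ d : Fin n → ℝ,
        fderiv ℝ (moreau β (fun v => -(ggf w v))) z d =
          ∑ i, proj (fun j => z j / β) i * d i) ∧
    (∀ z z' : Fin n → ℝ,
      Real.sqrt (∑ i, (proj (fun j => z j / β) i - proj (fun j => z' j / β) i) ^ 2) ≤
        (1 / β) * Real.sqrt (∑ i, (z i - z' i) ^ 2)) := by
  constructor
  · intro z
    have hd := moreau_hasFDeriv w hw hβ proj hproj z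
    refine ⟨hd.differentiableAt, ?_⟩
    intro d
    rw [hd.fderiv]
    simp [ContinuousLinearMap.sum_apply]
  · intro z z'
    have h := proj_lip w hβ proj hproj z z'
    rw [toE_sub, norm_toE, toE_sub, norm_toE] at h
    exact h
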